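/- The metric space (𝕍⁺, d_L) is complete: every Cauchy sequence in (𝕍⁺, d_L) converges to an element of 𝕍⁺. -/

import Mathlib

open MeasureTheory Filter Set Topology

noncomputable section

/-- Membership in the space `𝕍⁺` of nondecreasing, left-continuous functions
`v : [0,T) → ℝ ∪ {−∞}` with `v 0 = −∞` and `v` real-valued on `(0,T)`
(encoded as functions `ℝ → WithBot ℝ`, normalized to `⊥` outside `(0,T)`;
left-continuity of a nondecreasing function is expressed in order-theoretic
terms: `v t` is the least upper bound of the values of `v` on `[0,t)`). -/
def InVPlus (T : ℝ) (v : ℝ → WithBot ℝ) : Prop :=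
  (∀ t : ℝ, t ∉ Set.Ioo 0 T → v t = ⊥) ∧
  (∀ s t : ℝ, 0 ≤ s → s ≤ t → t < T → v s ≤ v t) ∧
  (∀ t : ℝ, t ∈ Set.Ioo 0 T → v t ≠ ⊥) ∧
  (∀ t : ℝ, t ∈ Set.Ioo 0 T → IsLUB (v '' Set.Ico 0 t) (v t))

/-- The Lévy metric `d_L` on `𝕍⁺`:
`d_L(v₁,v₂) = inf {ε ≥ 0 : v₁((t−ε)∨0) − ε ≤ v₂(t), v₂((t−ε)∨0) − ε ≤ v₁(t), ∀ t ∈ (0,T)}`. -/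
noncomputable def dL (T : ℝ) (v₁ v₂ : ℝ → WithBot ℝ) : ℝ :=
  sInf {ε : ℝ | 0 ≤ ε ∧ ∀ t : ℝ, t ∈ Set.Ioo 0 T →
    (v₁ (max (t - ε) 0)).map (fun x => x - ε) ≤ v₂ t ∧
    (v₂ (max (t - ε) 0)).map (fun x => x - ε) ≤ v₁ t}

/-- The defining set of the Lévy metric. -/
def dlSet (T : ℝ) (v₁ v₂ : ℝ → WithBot ℝ) : Set ℝ :=
  {ε : ℝ | 0 ≤ ε ∧ ∀ t : ℝ, t ∈ Set.Ioo 0 T →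
    (v₁ (max (t - ε) 0)).map (fun x => x - ε) ≤ v₂ t ∧
    (v₂ (max (t - ε) 0)).map (fun x => x - ε) ≤ v₁ t}

lemma dL_eq_sInf (T : ℝ) (v₁ v₂ : ℝ → WithBot ℝ) :
    dL T v₁ v₂ = sInf (dlSet T v₁ v₂) := rfl

lemma map_sub_mono {a b : WithBot ℝ} {x ε : ℝ} (hab : a ≤ b) (hxε : x ≤ ε) :
    a.map (fun r => r - ε) ≤ b.map (fun r => r - x) := by
  cases a with
  | bot => simp
  | coe r =>
    cases b with
    | bot => exact absurd hab (by simp)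
    | coe s =>
      simp only [WithBot.map_coe, WithBot.coe_le_coe] at *
      linarith

lemma dlSet_upward {T : ℝ} (hT : 0 < T) {v₁ v₂ : ℝ → WithBot ℝ}
    (h₁ : InVPlus T v₁) (h₂ : InVPlus T v₂) {x ε : ℝ}
    (hx : x ∈ dlSet T v₁ v₂) (hxε : x ≤ ε) : ε ∈ dlSet T v₁ v₂ := by
  obtain ⟨hx0, hx⟩ := hx
  refine ⟨hx0.trans hxε, fun t ht => ?_⟩
  obtain ⟨h1, h2⟩ := hx t ht
  have hmax : max (t - ε) 0 ≤ max (t - x) 0 :=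
    max_le_max (by linarith) le_rfl
  have hlt : max (t - x) 0 < T := max_lt (by linarith [ht.2]) hT
  have hm1 : v₁ (max (t - ε) 0) ≤ v₁ (max (t - x) 0) :=
    h₁.2.1 _ _ (le_max_right _ _) hmax hlt
  have hm2 : v₂ (max (t - ε) 0) ≤ v₂ (max (t - x) 0) :=
    h₂.2.1 _ _ (le_max_right _ _) hmax hlt
  exact ⟨(map_sub_mono hm1 hxε).trans h1, (map_sub_mono hm2 hxε).trans h2⟩

lemma T_mem_dlSet {T : ℝ} (hT : 0 < T) {v₁ v₂ : ℝ → WithBot ℝ}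
    (h₁ : InVPlus T v₁) (h₂ : InVPlus T v₂) : T ∈ dlSet T v₁ v₂ := by
  refine ⟨hT.le, fun t ht => ?_⟩
  have hmax : max (t - T) 0 = 0 := max_eq_right (by linarith [ht.2])
  have h0 : (0:ℝ) ∉ Set.Ioo 0 T := by simp
  rw [hmax, h₁.1 0 h0, h₂.1 0 h0]
  exact ⟨bot_le, bot_le⟩

lemma dlSet_bddBelow {T : ℝ} (v₁ v₂ : ℝ → WithBot ℝ) : BddBelow (dlSet T v₁ v₂) :=
  ⟨0, fun _ hx => hx.1⟩

lemma dL_nonneg {T : ℝ} (hT : 0 < T) {v₁ v₂ : ℝ → WithBot ℝ}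
    (h₁ : InVPlus T v₁) (h₂ : InVPlus T v₂) : 0 ≤ dL T v₁ v₂ :=
  le_csInf ⟨T, T_mem_dlSet hT h₁ h₂⟩ fun _ hx => hx.1

lemma mem_of_dL_lt {T : ℝ} (hT : 0 < T) {v₁ v₂ : ℝ → WithBot ℝ}
    (h₁ : InVPlus T v₁) (h₂ : InVPlus T v₂) {ε : ℝ}
    (h : dL T v₁ v₂ < ε) : ε ∈ dlSet T v₁ v₂ := by
  rw [dL_eq_sInf] at h
  obtain ⟨x, hx, hxε⟩ := exists_lt_of_csInf_lt ⟨T, T_mem_dlSet hT h₁ h₂⟩ h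
  exact dlSet_upward hT h₁ h₂ hx hxε.le

lemma dL_le_of_mem {T : ℝ} {v₁ v₂ : ℝ → WithBot ℝ} {ε : ℝ}
    (h : ε ∈ dlSet T v₁ v₂) : dL T v₁ v₂ ≤ ε :=
  csInf_le (dlSet_bddBelow v₁ v₂) h

/-- **`(𝕍⁺, d_L)` is complete (Step 3 of Proposition D.1).**
Every Cauchy sequence in `(𝕍⁺, d_L)` converges (in `d_L`) to an element of `𝕍⁺`. -/
theorem dL_complete (T : ℝ) (hT : 0 < T)
    (v : ℕ → ℝ → WithBot ℝ) (hv : ∀ n, InVPlus T (v n))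
    (hcauchy : ∀ ε : ℝ, 0 < ε → ∃ N : ℕ, ∀ m n : ℕ, N ≤ m → N ≤ n →
      dL T (v m) (v n) < ε) :
    ∃ w : ℝ → WithBot ℝ, InVPlus T w ∧
      Tendsto (fun n => dL T (v n) w) atTop (nhds 0) := by
  -- real-valued versions
  set f : ℕ → ℝ → ℝ := fun n t => (v n t).unbotD 0 with hf
  have hcoe : ∀ n t, t ∈ Set.Ioo 0 T → v n t = ((f n t : ℝ) : WithBot ℝ) := by
    intro n t ht
    obtain ⟨r, hr⟩ := WithBot.ne_bot_iff_exists.mp ((hv n).2.2.1 t ht)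
    simp [hf, ← hr]
  have fmono : ∀ n, ∀ s t : ℝ, s ∈ Set.Ioo 0 T → t ∈ Set.Ioo 0 T → s ≤ t →
      f n s ≤ f n t := by
    intro n s t hs ht hst
    have := (hv n).2.1 s t hs.1.le hst ht.2
    rw [hcoe n s hs, hcoe n t ht, WithBot.coe_le_coe] at this
    exact this
  -- Cauchy condition in real terms
  have hC : ∀ ε : ℝ, 0 < ε → ∃ N : ℕ, ∀ m n : ℕ, N ≤ m → N ≤ n →
      ∀ t : ℝ, 0 < t - ε → t < T → f m (t - ε) - ε ≤ f n t := by
    intro ε hε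
    obtain ⟨N, hN⟩ := hcauchy ε hε
    refine ⟨N, fun m n hm hn t ht0 htT => ?_⟩
    have hmem := mem_of_dL_lt hT (hv m) (hv n) (hN m n hm hn)
    have ht : t ∈ Set.Ioo 0 T := ⟨by linarith, htT⟩
    have h1 := (hmem.2 t ht).1
    have hmax : max (t - ε) 0 = t - ε := max_eq_left (by linarith)
    rw [hmax, hcoe m (t - ε) ⟨ht0, by linarith⟩, hcoe n t ht] at h1
    rw [WithBot.map_coe, WithBot.coe_le_coe] at h1
    exact h1
  -- limsup function
  set L : ℝ → ℝ := fun t => limsup (fun n => f n t) atTop with hL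
  have hbddA : ∀ t : ℝ, t ∈ Set.Ioo 0 T →
      IsBoundedUnder (· ≤ ·) atTop (fun n => f n t) := by
    intro t ht
    have hε : 0 < (T - t) / 2 := by linarith [ht.2]
    obtain ⟨N, hN⟩ := hC ((T - t) / 2) hε
    refine isBoundedUnder_of_eventually_le (a := f N ((t + T) / 2) + (T - t) / 2)
      (eventually_atTop.2 ⟨N, fun n hn => ?_⟩)
    have := hN n N hn le_rfl ((t + T) / 2) (by linarith [ht.1]) (by linarith [ht.2])
    have heq : (t + T) / 2 - (T - t) / 2 = t := by ring
    rw [heq] at this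
    linarith
  have hbddB : ∀ t : ℝ, t ∈ Set.Ioo 0 T →
      IsBoundedUnder (· ≥ ·) atTop (fun n => f n t) := by
    intro t ht
    have hε : 0 < t / 2 := by linarith [ht.1]
    obtain ⟨N, hN⟩ := hC (t / 2) hε
    refine isBoundedUnder_of_eventually_ge (a := f N (t / 2) - t / 2)
      (eventually_atTop.2 ⟨N, fun n hn => ?_⟩)
    have := hN N n le_rfl hn t (by linarith [ht.1]) ht.2
    have heq : t - t / 2 = t / 2 := by ring
    rw [heq] at this
    exact this
  have Lmono : ∀ s t : ℝ, s ∈ Set.Ioo 0 T → t ∈ Set.Ioo 0 T → s ≤ t →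
      L s ≤ L t := by
    intro s t hs ht hst
    exact limsup_le_limsup (Eventually.of_forall fun n => fmono n s t hs ht hst)
      ((hbddB s hs).isCoboundedUnder_le) (hbddA t ht)
  -- two key inequalities relating f and L
  have hKey : ∀ ε : ℝ, 0 < ε → ∃ N : ℕ, ∀ n : ℕ, N ≤ n →
      ∀ t : ℝ, 0 < t - ε → t < T →
        (f n (t - ε) - ε ≤ L t ∧ L (t - ε) - ε ≤ f n t) := by
    intro ε hε
    obtain ⟨N, hN⟩ := hC ε hε
    refine ⟨N, fun n hn t ht0 htT => ⟨?_, ?_⟩⟩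
    · have ht : t ∈ Set.Ioo 0 T := ⟨by linarith, htT⟩
      refine le_limsup_of_frequently_le ?_ (hbddA t ht)
      exact (eventually_atTop.2 ⟨N, fun m hm => hN n m hn hm t ht0 htT⟩).frequently
    · have hs : t - ε ∈ Set.Ioo 0 T := ⟨ht0, by linarith⟩
      have : L (t - ε) ≤ f n t + ε := by
        refine limsup_le_of_le ((hbddB _ hs).isCoboundedUnder_le) ?_
        exact eventually_atTop.2 ⟨N, fun m hm => by linarith [hN m n hm hn t ht0 htT]⟩
      linarith
  -- left-continuous regularization
  set R : ℝ → ℝ := fun t => sSup (L '' Set.Ioo 0 t) with hR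
  have hne : ∀ t : ℝ, 0 < t → (L '' Set.Ioo 0 t).Nonempty := by
    intro t ht
    exact ⟨L (t / 2), ⟨t / 2, ⟨by linarith, by linarith⟩, rfl⟩⟩
  have hbdd : ∀ t : ℝ, t ∈ Set.Ioo 0 T → BddAbove (L '' Set.Ioo 0 t) := by
    intro t ht
    refine ⟨L ((t + T) / 2), ?_⟩
    rintro y ⟨u, hu, rfl⟩
    exact Lmono u ((t + T) / 2) ⟨hu.1, by linarith [hu.2, ht.2]⟩
      ⟨by linarith [ht.1, ht.2], by linarith [ht.2]⟩ (by linarith [hu.2, ht.2])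
  set w : ℝ → WithBot ℝ := fun t => if t ∈ Set.Ioo 0 T then ((R t : ℝ) : WithBot ℝ) else ⊥
    with hw
  have hwcoe : ∀ t : ℝ, t ∈ Set.Ioo 0 T → w t = ((R t : ℝ) : WithBot ℝ) := by
    intro t ht; simp only [hw]; rw [if_pos ht]
  have Rmono : ∀ s t : ℝ, s ∈ Set.Ioo 0 T → t ∈ Set.Ioo 0 T → s ≤ t → R s ≤ R t := by
    intro s t hs ht hst
    exact csSup_le_csSup (hbdd t ht) (hne s hs.1)
      (Set.image_mono (Set.Ioo_subset_Ioo le_rfl hst))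
  have hwmono : ∀ s t : ℝ, 0 ≤ s → s ≤ t → t < T → w s ≤ w t := by
    intro s t hs hst htT
    by_cases hsm : s ∈ Set.Ioo 0 T
    · have htm : t ∈ Set.Ioo 0 T := ⟨lt_of_lt_of_le hsm.1 hst, htT⟩
      rw [hwcoe s hsm, hwcoe t htm, WithBot.coe_le_coe]
      exact Rmono s t hsm htm hst
    · rw [hw]; simp only [if_neg hsm]; exact bot_le
  have hwVP : InVPlus T w := by
    refine ⟨fun t ht => by simp only [hw]; rw [if_neg ht],
      hwmono, fun t ht => by simp only [hw]; rw [if_pos ht]; exact WithBot.coe_ne_bot, ?_⟩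
    intro t ht
    constructor
    · rintro y ⟨s, hs, rfl⟩
      exact hwmono s t hs.1 hs.2.le ht.2
    · intro b hb
      have hhalf : t / 2 ∈ Set.Ioo 0 T := ⟨by linarith [ht.1], by linarith [ht.2]⟩
      have hbb : w (t / 2) ≤ b := hb ⟨t / 2, ⟨by linarith [ht.1], by linarith [ht.1]⟩, rfl⟩
      rw [hwcoe _ hhalf] at hbb
      obtain ⟨β, hβ⟩ := WithBot.ne_bot_iff_exists.mp (ne_bot_of_le_ne_bot (by simp) hbb)
      rw [hwcoe t ht, ← hβ, WithBot.coe_le_coe]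
      refine csSup_le (hne t ht.1) ?_
      rintro y ⟨u, hu, rfl⟩
      have hsm : (u + t) / 2 ∈ Set.Ioo 0 T :=
        ⟨by linarith [hu.1, hu.2], by linarith [hu.2, ht.2]⟩
      have h1 : L u ≤ R ((u + t) / 2) :=
        le_csSup (hbdd _ hsm) ⟨u, ⟨hu.1, by linarith [hu.2]⟩, rfl⟩
      have h2 : w ((u + t) / 2) ≤ (β : WithBot ℝ) := by
        rw [hβ]
        exact hb ⟨(u + t) / 2, ⟨by linarith [hu.1, hu.2], by linarith [hu.2]⟩, rfl⟩
      rw [hwcoe _ hsm, WithBot.coe_le_coe] at h2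
      linarith
  refine ⟨w, hwVP, ?_⟩
  -- convergence
  rw [Metric.tendsto_atTop]
  intro δ hδ
  have hε : 0 < δ / 4 := by linarith
  obtain ⟨N, hN⟩ := hKey (δ / 4) hε
  refine ⟨N, fun n hn => ?_⟩
  have hmem : 3 * (δ / 4) ∈ dlSet T (v n) w := by
    refine ⟨by linarith, fun t ht => ?_⟩
    constructor
    · -- v n side
      by_cases hpos : 0 < t - 3 * (δ / 4)
      · have hmax : max (t - 3 * (δ / 4)) 0 = t - 3 * (δ / 4) := max_eq_left hpos.le
        have hsm : t - 3 * (δ / 4) ∈ Set.Ioo 0 T := ⟨hpos, by linarith [ht.2]⟩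
        rw [hmax, hcoe n _ hsm, hwcoe t ht, WithBot.map_coe, WithBot.coe_le_coe]
        have h1 := (hN n hn (t - 2 * (δ / 4)) (by linarith) (by linarith [ht.2])).1
        have heq : t - 2 * (δ / 4) - δ / 4 = t - 3 * (δ / 4) := by ring
        rw [heq] at h1
        have h2 : L (t - 2 * (δ / 4)) ≤ R t :=
          le_csSup (hbdd t ht) ⟨t - 2 * (δ / 4), ⟨by linarith, by linarith⟩, rfl⟩
        linarith
      · have hmax : max (t - 3 * (δ / 4)) 0 = 0 := max_eq_right (by linarith)
        rw [hmax, (hv n).1 0 (by simp)]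
        exact bot_le
    · -- w side
      by_cases hpos : 0 < t - 3 * (δ / 4)
      · have hmax : max (t - 3 * (δ / 4)) 0 = t - 3 * (δ / 4) := max_eq_left hpos.le
        have hsm : t - 3 * (δ / 4) ∈ Set.Ioo 0 T := ⟨hpos, by linarith [ht.2]⟩
        rw [hmax, hwcoe _ hsm, hcoe n t ht, WithBot.map_coe, WithBot.coe_le_coe]
        have : R (t - 3 * (δ / 4)) ≤ f n t + δ / 4 := by
          refine csSup_le (hne _ hpos) ?_
          rintro y ⟨u, hu, rfl⟩
          have h1 := (hN n hn (u + δ / 4) (by linarith [hu.1]) (by linarith [hu.2, ht.2])).2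
          have heq : u + δ / 4 - δ / 4 = u := by ring
          rw [heq] at h1
          have h2 : f n (u + δ / 4) ≤ f n t :=
            fmono n (u + δ / 4) t ⟨by linarith [hu.1], by linarith [hu.2, ht.2]⟩ ht
              (by linarith [hu.2])
          linarith
        linarith
      · have hmax : max (t - 3 * (δ / 4)) 0 = 0 := max_eq_right (by linarith)
        rw [hmax, hwVP.1 0 (by simp)]
        exact bot_le
  have hle : dL T (v n) w ≤ 3 * (δ / 4) := dL_le_of_mem hmem
  have hge : 0 ≤ dL T (v n) w := dL_nonneg hT (hv n) hwVP
  rw [Real.dist_eq, sub_zero, abs_of_nonneg hge]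
  linarith

end
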